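/- Positivity of the Zaremba-Jaumann rate of the Seth-Hill strain with exponent k: let B be a real symmetric positive definite 3×3 matrix, let k be a natural number, and let D be a nonzero symmetric 3×3 matrix. Then ⟨ Σ_{i=0}^{k} ( B^{i+1} D B^{k−i} + B^{i} D B^{k−i+1} ), D ⟩ > 0. -/

import Mathlib

open Matrix

lemma trace_mul_transpose_nonneg (M : Matrix (Fin 3) (Fin 3) ℝ) :
    0 ≤ (M * Mᵀ).trace := by
  have : (M * Mᵀ).trace = ∑ i, ∑ j, (M i j)^2 := by
    simp [Matrix.trace, Matrix.mul_apply, sq]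
  rw [this]
  positivity

lemma trace_mul_transpose_pos {M : Matrix (Fin 3) (Fin 3) ℝ} (hM : M ≠ 0) :
    0 < (M * Mᵀ).trace := by
  have h : (M * Mᵀ).trace = ∑ i, ∑ j, (M i j)^2 := by
    simp [Matrix.trace, Matrix.mul_apply, sq]
  rw [h]
  obtain ⟨i, j, hij⟩ : ∃ i j, M i j ≠ 0 := by
    by_contra hc; push_neg at hc
    exact hM (by ext i j; simp [hc])
  refine Finset.sum_pos' (fun i _ => Finset.sum_nonneg fun j _ => sq_nonneg _) ⟨i, Finset.mem_univ _, ?_⟩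
  exact Finset.sum_pos' (fun j _ => sq_nonneg _) ⟨j, Finset.mem_univ _, by positivity⟩

lemma transpose_eq_of_herm {S : Matrix (Fin 3) (Fin 3) ℝ} (h : S.IsHermitian) : Sᵀ = S := by
  exact (Matrix.conjTranspose_eq_transpose_of_trivial S).symm.trans h

lemma exists_sqrt {P : Matrix (Fin 3) (Fin 3) ℝ} (hP : P.PosSemidef) :
    ∃ S : Matrix (Fin 3) (Fin 3) ℝ, Sᵀ = S ∧ S * S = P := by
  open scoped MatrixOrder in
  exact ⟨CFC.sqrt P, transpose_eq_of_herm (CFC.sqrt_nonneg P).posSemidef.1, CFC.sqrt_mul_sqrt_self P hP.nonneg⟩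

lemma key_nonneg {P Q : Matrix (Fin 3) (Fin 3) ℝ} (hP : P.PosSemidef) (hQ : Q.PosSemidef)
    {D : Matrix (Fin 3) (Fin 3) ℝ} (hD : Dᵀ = D) :
    0 ≤ (P * D * Q * D).trace := by
  obtain ⟨S, hS, hSS⟩ := exists_sqrt hP
  obtain ⟨T, hT, hTT⟩ := exists_sqrt hQ
  have key : (P * D * Q * D).trace = ((S*D*T) * (S*D*T)ᵀ).trace := by
    rw [← hSS, ← hTT]
    rw [Matrix.transpose_mul, Matrix.transpose_mul, hS, hT, hD]
    rw [show S*S*D*(T*T)*D = S*(S*D*T*(T*D)) by simp only [mul_assoc], Matrix.trace_mul_comm]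
    congr 1; simp only [mul_assoc]
  rw [key]; exact trace_mul_transpose_nonneg _

lemma key_pos {P : Matrix (Fin 3) (Fin 3) ℝ} (hP : P.PosSemidef) (hPdet : P.det ≠ 0)
    {D : Matrix (Fin 3) (Fin 3) ℝ} (hD : Dᵀ = D) (hD0 : D ≠ 0) :
    0 < (P * D * D).trace := by
  obtain ⟨S, hS, hSS⟩ := exists_sqrt hP
  have hdet : IsUnit S.det := by
    have hd : S.det * S.det = P.det := by rw [← Matrix.det_mul, hSS]
    refine isUnit_iff_ne_zero.2 fun h => ?_
    rw [h, mul_zero] at hd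
    exact hPdet hd.symm
  have hSD : S * D ≠ 0 := by
    intro h
    have : Invertible S := S.invertibleOfIsUnitDet hdet
    exact hD0 (Matrix.mul_right_injective_of_invertible S (h.trans (Matrix.mul_zero S).symm))
  have key : (P * D * D).trace = ((S*D) * (S*D)ᵀ).trace := by
    rw [← hSS, Matrix.transpose_mul, hS, hD]
    rw [show S*S*D*D = S*(S*D*D) by simp only [mul_assoc], Matrix.trace_mul_comm]
    congr 1; simp only [mul_assoc]
  rw [key]; exact trace_mul_transpose_pos hSD

theorem seth_hill_positive
    (B : Matrix (Fin 3) (Fin 3) ℝ) (hB : B.PosDef) (k : ℕ)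
    (D : Matrix (Fin 3) (Fin 3) ℝ) (hD : Dᵀ = D) (hD0 : D ≠ 0) :
    0 < ((∑ i ∈ Finset.range (k + 1),
        (B ^ (i + 1) * D * B ^ (k - i) + B ^ i * D * B ^ (k - i + 1))) * Dᵀ).trace := by
  rw [hD, Finset.sum_mul, Matrix.trace_sum]
  have hBs : Bᵀ = B := transpose_eq_of_herm hB.1
  refine Finset.sum_pos' (fun i hi => ?_) ⟨k, Finset.self_mem_range_succ k, ?_⟩
  · rw [Matrix.add_mul, Matrix.trace_add]
    exact add_nonneg
      (key_nonneg (hB.posSemidef.pow (i+1)) (hB.posSemidef.pow (k-i)) hD)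
      (key_nonneg (hB.posSemidef.pow i) (hB.posSemidef.pow (k-i+1)) hD)
  · rw [Matrix.add_mul, Matrix.trace_add, Nat.sub_self, pow_zero, Matrix.mul_one]
    have hdet : (B ^ (k + 1)).det ≠ 0 := by
      rw [Matrix.det_pow]
      exact pow_ne_zero _ hB.det_pos.ne'
    have h1 : 0 < (B ^ (k + 1) * D * D).trace :=
      key_pos (hB.posSemidef.pow (k+1)) hdet hD hD0
    have h2 : 0 ≤ (B ^ k * D * B ^ (0 + 1) * D).trace :=
      key_nonneg (hB.posSemidef.pow k) (hB.posSemidef.pow 1) hD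
    simp only [zero_add] at h2
    linarith [h2]
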